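/- Let X_a, X^b be as above and suppose V_b : X^b → ℂ satisfies sup |⟨w^b⟩^μ V_b(w^b)| < ∞ for μ > 0, with V_b extended to X by V_b(w) = V_b(w^b). Then there exists C > 0 (depending only on the geometry and μ) such that |V_b(w)| ≤ C · ⟨w_a⟩^{-μ} · ⟨w^a⟩^{μ} · sup|⟨w^b⟩^μ V_b| for all w ∈ X. -/

import Mathlib

open Real

lemma aux_sqrt (K a b c : ℝ) (hK : 1 ≤ K) (h : a ≤ K * (b + c)) (ha : 0 ≤ a) (hb : 0 ≤ b) (hc : 0 ≤ c) :
    Real.sqrt (1 + a ^ 2) ≤ (Real.sqrt 2 * K) * (Real.sqrt (1 + b ^ 2) * Real.sqrt (1 + c ^ 2)) := by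
  have h1 : 1 + a ^ 2 ≤ 2 * K ^ 2 * ((1 + b ^ 2) * (1 + c ^ 2)) := by
    nlinarith [mul_self_le_mul_self ha h, sq_nonneg (b - c), sq_nonneg (b * c),
      mul_nonneg hb hc, sq_nonneg K, mul_le_mul hK hK (by norm_num) (by linarith),
      mul_nonneg (mul_nonneg hb hc) (sq_nonneg K)]
  calc Real.sqrt (1 + a ^ 2) ≤ Real.sqrt (2 * K ^ 2 * ((1 + b ^ 2) * (1 + c ^ 2))) :=
        Real.sqrt_le_sqrt h1
    _ = (Real.sqrt 2 * K) * (Real.sqrt (1 + b ^ 2) * Real.sqrt (1 + c ^ 2)) := by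
        rw [Real.sqrt_mul (by positivity), Real.sqrt_mul (by positivity),
          Real.sqrt_sq (by linarith : (0:ℝ) ≤ K), Real.sqrt_mul (by positivity)]

set_option maxHeartbeats 1000000 in
theorem stmt2 (n : ℕ) (Xa Xb : Submodule ℝ (EuclideanSpace ℝ (Fin n)))
    (hab : Xa ⊓ Xb = ⊥) (hsum : Xaᗮ ⊔ Xbᗮ = ⊤) (μ : ℝ) (hμ : 0 < μ) :
    ∃ C : ℝ, 0 < C ∧ ∀ (Vb : EuclideanSpace ℝ (Fin n) → ℂ) (S : ℝ),
      (∀ w, Vb w = Vb (Submodule.orthogonalProjectionOnto Xbᗮ w : EuclideanSpace ℝ (Fin n))) →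
      (∀ w, Real.sqrt (1 + ‖(Submodule.orthogonalProjectionOnto Xbᗮ w :
          EuclideanSpace ℝ (Fin n))‖ ^ 2) ^ μ * ‖Vb w‖ ≤ S) →
      ∀ w, ‖Vb w‖ ≤
        C * Real.sqrt (1 + ‖(Submodule.orthogonalProjectionOnto Xa w :
            EuclideanSpace ℝ (Fin n))‖ ^ 2) ^ (-μ) *
          Real.sqrt (1 + ‖(Submodule.orthogonalProjectionOnto Xaᗮ w :
            EuclideanSpace ℝ (Fin n))‖ ^ 2) ^ μ * S := by
  classical
  set E := EuclideanSpace ℝ (Fin n)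
  let f : Xa →ₗ[ℝ] ↥Xbᗮ := (Submodule.orthogonalProjectionOnto Xbᗮ).toLinearMap.comp Xa.subtype
  have hker : LinearMap.ker f = ⊥ := by
    rw [LinearMap.ker_eq_bot]
    intro x y hxy
    have hx : (Submodule.orthogonalProjectionOnto Xbᗮ (x : E)) = Submodule.orthogonalProjectionOnto Xbᗮ (y : E) := hxy
    have hmem' : ((x : E) - y) ∈ Xbᗮᗮ := by
      rw [← Submodule.orthogonalProjectionOnto_eq_zero_iff (K := Xbᗮ)]
      simp [map_sub, hx]
    rw [Submodule.orthogonal_orthogonal] at hmem'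
    have hmem : ((x : E) - y) ∈ Xa ⊓ Xb := ⟨sub_mem x.2 y.2, hmem'⟩
    rw [hab] at hmem
    exact Subtype.ext (by simpa [sub_eq_zero] using hmem)
  obtain ⟨K0, hK0, hanti⟩ := f.exists_antilipschitzWith hker
  set K : ℝ := max 1 K0 with hKdef
  have hK1 : (1:ℝ) ≤ K := le_max_left _ _
  have hbound : ∀ x : Xa, ‖(x:E)‖ ≤ K * ‖(Submodule.orthogonalProjectionOnto Xbᗮ (x:E) : E)‖ := by
    intro x
    have h0 := hanti.le_mul_dist x 0
    simp only [dist_zero_right, map_zero] at h0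
    have h2 : ‖x‖ ≤ K0 * ‖f x‖ := by simpa using h0
    have h3 : (K0 : ℝ) ≤ K := le_max_right _ _
    calc ‖(x:E)‖ = ‖x‖ := rfl
      _ ≤ K0 * ‖f x‖ := h2
      _ ≤ K * ‖f x‖ := by gcongr
      _ = K * ‖(Submodule.orthogonalProjectionOnto Xbᗮ (x:E) : E)‖ := rfl
  refine ⟨(Real.sqrt 2 * K) ^ μ, Real.rpow_pos_of_pos (by positivity) μ, ?_⟩
  intro Vb S hdep hS w
  set a := ‖(Submodule.orthogonalProjectionOnto Xa w : E)‖ with hadef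
  set b := ‖(Submodule.orthogonalProjectionOnto Xbᗮ w : E)‖ with hbdef
  set c := ‖(Submodule.orthogonalProjectionOnto Xaᗮ w : E)‖ with hcdef
  have ha0 : 0 ≤ a := norm_nonneg _
  have hb0 : 0 ≤ b := norm_nonneg _
  have hc0 : 0 ≤ c := norm_nonneg _
  have hw : (Submodule.orthogonalProjectionOnto Xa w : E) + (Submodule.orthogonalProjectionOnto Xaᗮ w : E) = w := by
    exact Xa.starProjection_add_starProjection_orthogonal w
  have hPnorm : ∀ v : E, ‖(Submodule.orthogonalProjectionOnto Xbᗮ v : E)‖ ≤ ‖v‖ := by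
    intro v
    calc ‖(Submodule.orthogonalProjectionOnto Xbᗮ v : E)‖ = ‖Submodule.orthogonalProjectionOnto Xbᗮ v‖ := rfl
      _ ≤ ‖Submodule.orthogonalProjectionOnto Xbᗮ‖ * ‖v‖ := (Submodule.orthogonalProjectionOnto Xbᗮ).le_opNorm v
      _ ≤ 1 * ‖v‖ := by gcongr; exact Submodule.orthogonalProjectionOnto_norm_le Xbᗮ
      _ = ‖v‖ := one_mul _
  have habc : a ≤ K * (b + c) := by
    have h1 : a ≤ K * ‖(Submodule.orthogonalProjectionOnto Xbᗮ ((Submodule.orthogonalProjectionOnto Xa w : E)) : E)‖ :=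
      hbound (Submodule.orthogonalProjectionOnto Xa w)
    have h2 : (Submodule.orthogonalProjectionOnto Xbᗮ ((Submodule.orthogonalProjectionOnto Xa w : E)))
        = Submodule.orthogonalProjectionOnto Xbᗮ w - Submodule.orthogonalProjectionOnto Xbᗮ ((Submodule.orthogonalProjectionOnto Xaᗮ w : E)) := by
      rw [← hw]; simp [map_add]
    have h3 : ‖(Submodule.orthogonalProjectionOnto Xbᗮ ((Submodule.orthogonalProjectionOnto Xa w : E)) : E)‖ ≤ b + c := by
      rw [h2]
      calc ‖((Submodule.orthogonalProjectionOnto Xbᗮ w - Submodule.orthogonalProjectionOnto Xbᗮ ((Submodule.orthogonalProjectionOnto Xaᗮ w : E))) : E)‖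
          ≤ ‖(Submodule.orthogonalProjectionOnto Xbᗮ w : E)‖ + ‖(Submodule.orthogonalProjectionOnto Xbᗮ ((Submodule.orthogonalProjectionOnto Xaᗮ w : E)) : E)‖ := by
            push_cast; exact norm_sub_le _ _
        _ ≤ b + c := by
            have := hPnorm (Submodule.orthogonalProjectionOnto Xaᗮ w : E)
            rw [← hbdef, ← hcdef] at *
            linarith
    calc a ≤ K * ‖(Submodule.orthogonalProjectionOnto Xbᗮ ((Submodule.orthogonalProjectionOnto Xa w : E)) : E)‖ := h1
      _ ≤ K * (b + c) := by nlinarith [h3, hK1]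
  -- positive quantities
  have hbra : (0:ℝ) < Real.sqrt (1 + a ^ 2) := Real.sqrt_pos.mpr (by positivity)
  have hbrb : (0:ℝ) < Real.sqrt (1 + b ^ 2) := Real.sqrt_pos.mpr (by positivity)
  have hbrc : (0:ℝ) < Real.sqrt (1 + c ^ 2) := Real.sqrt_pos.mpr (by positivity)
  have hc0' : (0:ℝ) < Real.sqrt 2 * K := by positivity
  have hkey : Real.sqrt (1 + a ^ 2) ≤ (Real.sqrt 2 * K) * (Real.sqrt (1 + b ^ 2) * Real.sqrt (1 + c ^ 2)) :=
    aux_sqrt K a b c hK1 habc ha0 hb0 hc0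
  have hVb : ‖Vb w‖ ≤ S * Real.sqrt (1 + b ^ 2) ^ (-μ) := by
    have h := hS w
    rw [← hbdef] at h
    have hposb : (0:ℝ) < Real.sqrt (1 + b ^ 2) ^ μ := Real.rpow_pos_of_pos hbrb μ
    rw [Real.rpow_neg hbrb.le]
    have h' : ‖Vb w‖ ≤ S / Real.sqrt (1 + b ^ 2) ^ μ := (le_div_iff₀' hposb).mpr h
    calc ‖Vb w‖ ≤ S / Real.sqrt (1 + b ^ 2) ^ μ := h'
      _ = S * (Real.sqrt (1 + b ^ 2) ^ μ)⁻¹ := div_eq_mul_inv _ _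
  have hS0 : 0 ≤ S := le_trans (by positivity) (hS w)
  clear_value a b c
  -- raise to power μ
  have hkeyμ : Real.sqrt (1 + a ^ 2) ^ μ ≤ (Real.sqrt 2 * K) ^ μ *
      (Real.sqrt (1 + b ^ 2) ^ μ * Real.sqrt (1 + c ^ 2) ^ μ) := by
    calc Real.sqrt (1 + a ^ 2) ^ μ
        ≤ ((Real.sqrt 2 * K) * (Real.sqrt (1 + b ^ 2) * Real.sqrt (1 + c ^ 2))) ^ μ :=
          Real.rpow_le_rpow (le_of_lt hbra) hkey hμ.le
      _ = (Real.sqrt 2 * K) ^ μ * (Real.sqrt (1 + b ^ 2) ^ μ * Real.sqrt (1 + c ^ 2) ^ μ) := by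
          rw [Real.mul_rpow hc0'.le (by positivity), Real.mul_rpow hbrb.le hbrc.le]
  -- ⟨b⟩^{-μ} ≤ c0^μ ⟨a⟩^{-μ} ⟨c⟩^μ
  have hfinal : Real.sqrt (1 + b ^ 2) ^ (-μ) ≤
      (Real.sqrt 2 * K) ^ μ * Real.sqrt (1 + a ^ 2) ^ (-μ) * Real.sqrt (1 + c ^ 2) ^ μ := by
    rw [Real.rpow_neg hbrb.le, Real.rpow_neg hbra.le]
    rw [inv_le_iff_one_le_mul₀ (Real.rpow_pos_of_pos hbrb μ)]
    have haμ : (0:ℝ) < Real.sqrt (1 + a ^ 2) ^ μ := Real.rpow_pos_of_pos hbra μ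
    have : Real.sqrt (1 + a ^ 2) ^ μ ≤
        (Real.sqrt 2 * K) ^ μ * (Real.sqrt (1 + c ^ 2) ^ μ) * Real.sqrt (1 + b ^ 2) ^ μ := by
      calc Real.sqrt (1 + a ^ 2) ^ μ ≤ (Real.sqrt 2 * K) ^ μ *
          (Real.sqrt (1 + b ^ 2) ^ μ * Real.sqrt (1 + c ^ 2) ^ μ) := hkeyμ
        _ = (Real.sqrt 2 * K) ^ μ * (Real.sqrt (1 + c ^ 2) ^ μ) * Real.sqrt (1 + b ^ 2) ^ μ := by ring
    calc (1:ℝ) = (Real.sqrt (1 + a ^ 2) ^ μ) * (Real.sqrt (1 + a ^ 2) ^ μ)⁻¹ := by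
          field_simp
      _ ≤ ((Real.sqrt 2 * K) ^ μ * (Real.sqrt (1 + c ^ 2) ^ μ) * Real.sqrt (1 + b ^ 2) ^ μ) *
            (Real.sqrt (1 + a ^ 2) ^ μ)⁻¹ := by gcongr
      _ = (Real.sqrt 2 * K) ^ μ * (Real.sqrt (1 + a ^ 2) ^ μ)⁻¹ * Real.sqrt (1 + c ^ 2) ^ μ *
            Real.sqrt (1 + b ^ 2) ^ μ := by ring
  calc ‖Vb w‖ ≤ S * Real.sqrt (1 + b ^ 2) ^ (-μ) := hVb
    _ ≤ S * ((Real.sqrt 2 * K) ^ μ * Real.sqrt (1 + a ^ 2) ^ (-μ) * Real.sqrt (1 + c ^ 2) ^ μ) := by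
        gcongr
    _ = (Real.sqrt 2 * K) ^ μ * Real.sqrt (1 + a ^ 2) ^ (-μ) * Real.sqrt (1 + c ^ 2) ^ μ * S := by
        ring
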